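/- Let K : ℝⁿ × ℝⁿ → ℂ satisfy the smoothness condition |K(x,y) − K(x',y)| ≤ ω(|x−x'|/|x−y|)/|x−y|ⁿ whenever |x−y| > 2|x−x'|, where ω is an increasing modulus of continuity with Dini constant ‖ω‖_Dini < ∞. Then for any x, ξ with |ξ − x| ≤ d and any integrable f, ∫_{|y−x| > 2d} |K(ξ,y) − K(x,y)| |f(y)| dy ≤ c_n ‖ω‖_Dini · Mf(x), where M is the Hardy–Littlewood maximal operator and c_n depends only on the dimension n. -/

import Mathlib

noncomputable section
open MeasureTheory ENNReal Set

/-- The (centered) Hardy–Littlewood maximal operator, with values in `ℝ≥0∞`. -/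
def maximalFunction {n : ℕ} (f : (Fin n → ℝ) → ℝ) (x : Fin n → ℝ) : ℝ≥0∞ :=
  ⨆ r ∈ Ioi (0 : ℝ), (volume (Metric.ball x r))⁻¹ * ∫⁻ y in Metric.ball x r, ‖f y‖₊

/-- Auxiliary: `∫ t in Ioc p q, c / t = c * log (q / p)` for `0 < p ≤ q`. -/
lemma aux_integral_const_div {c p q : ℝ} (hp : 0 < p) (hpq : p ≤ q) :
    ∫ t in Ioc p q, c / t = c * Real.log (q / p) := by
  have h0 : (0:ℝ) ∉ Set.uIcc p q := Set.notMem_uIcc_of_lt hp (lt_of_lt_of_le hp hpq)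
  rw [← intervalIntegral.integral_of_le hpq]
  have : (fun t : ℝ => c / t) = fun t : ℝ => c * (1 / t) := by funext t; ring
  rw [this, intervalIntegral.integral_const_mul, integral_one_div h0]

lemma aux_ratio {c A : ℝ} (hA : 0 < A) (n : ℕ) :
    c / A ^ n * (4 * A) ^ n = 4 ^ n * c := by
  have hAn : A ^ n ≠ 0 := by positivity
  rw [mul_pow, mul_comm ((4:ℝ) ^ n), ← mul_assoc, div_mul_cancel₀ _ hAn, mul_comm]

/-- if the kernel `K` satisfies the Dini smoothness condition
`|K(x,y) − K(x',y)| ≤ ω(|x−x'|/|x−y|)/|x−y|ⁿ` for `|x−y| > 2|x−x'|`, then for all `x, ξ`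
with `|ξ − x| ≤ d` and every integrable `f`,
`∫_{|y−x|>2d} |K(ξ,y) − K(x,y)| |f(y)| dy ≤ c_n ‖ω‖_Dini · Mf(x)`. -/
theorem annuli_smoothness_estimate (n : ℕ) :
    ∃ c : ℝ, 0 < c ∧
      ∀ (ω : ℝ → ℝ), MonotoneOn ω (Icc 0 1) → (∀ t ∈ Icc (0:ℝ) 1, 0 ≤ ω t) → ω 0 = 0 →
        (∀ s t : ℝ, 0 ≤ s → 0 ≤ t → s + t ≤ 1 → ω (s + t) ≤ ω s + ω t) →
        IntegrableOn (fun t => ω t / t) (Ioc (0:ℝ) 1) →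
      ∀ K : (Fin n → ℝ) → (Fin n → ℝ) → ℂ,
        (∀ x x' y : Fin n → ℝ, 2 * dist x x' < dist x y →
          ‖K x y - K x' y‖ ≤ ω (dist x x' / dist x y) / dist x y ^ n) →
      ∀ (f : (Fin n → ℝ) → ℝ), Integrable f →
      ∀ (x ξ : Fin n → ℝ) (d : ℝ), 0 < d → dist ξ x ≤ d →
        (∫⁻ y in {y | 2 * d < dist y x}, ‖K ξ y - K x y‖₊ * ‖f y‖₊) ≤
          ENNReal.ofReal (c * ∫ t in Ioc (0:ℝ) 1, ω t / t) * maximalFunction f x := by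
  have hlog2 : (0:ℝ) < Real.log 2 := Real.log_pos one_lt_two
  refine ⟨4 ^ n / Real.log 2, by positivity, ?_⟩
  intro ω hmono hnn hω0 _hsub hint K hK f hf x ξ d hd hξ
  set I : ℝ := ∫ t in Ioc (0:ℝ) 1, ω t / t with hI_def
  have hInn : 0 ≤ I := setIntegral_nonneg measurableSet_Ioc fun t ht =>
    div_nonneg (hnn t ⟨ht.1.le, ht.2⟩) ht.1.le
  -- dyadic points
  set a : ℕ → ℝ := fun k => (2:ℝ)⁻¹ ^ (k + 1) with ha_def
  have ha_pos : ∀ k, 0 < a k := fun k => by positivity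
  have hb_pos : ∀ k : ℕ, (0:ℝ) < (2:ℝ)⁻¹ ^ k := fun k => by positivity
  have hb_le_one : ∀ k : ℕ, (2:ℝ)⁻¹ ^ k ≤ 1 :=
    fun k => pow_le_one₀ (by norm_num) (by norm_num)
  have ha_le_one : ∀ k, a k ≤ 1 := fun k => hb_le_one (k + 1)
  have ha_lt_b : ∀ k : ℕ, a k < (2:ℝ)⁻¹ ^ k := by
    intro k
    simp only [ha_def, pow_succ]
    nlinarith [hb_pos k]
  have ha_mem : ∀ k, a k ∈ Icc (0:ℝ) 1 := fun k => ⟨(ha_pos k).le, ha_le_one k⟩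
  have hIsub : ∀ k : ℕ, Ioc (a k) ((2:ℝ)⁻¹ ^ k) ⊆ Ioc (0:ℝ) 1 := by
    intro k t ht
    exact ⟨lt_of_le_of_lt (ha_pos k).le ht.1, ht.2.trans (hb_le_one k)⟩
  -- key real estimate: partial sums of ω (a k) are bounded by I / log 2
  have key : ∀ N : ℕ, ∑ k ∈ Finset.range N, ω (a k) ≤ I / Real.log 2 := by
    intro N
    rw [le_div_iff₀ hlog2, Finset.sum_mul]
    have hterm : ∀ k : ℕ,
        ω (a k) * Real.log 2 ≤ ∫ t in Ioc (a k) ((2:ℝ)⁻¹ ^ k), ω t / t := by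
      intro k
      have hq : (2:ℝ)⁻¹ ^ k / a k = 2 := by
        simp only [ha_def, pow_succ]
        field_simp
      have h1 : ω (a k) * Real.log 2 = ∫ t in Ioc (a k) ((2:ℝ)⁻¹ ^ k), ω (a k) / t := by
        rw [aux_integral_const_div (ha_pos k) (ha_lt_b k).le, hq]
      rw [h1]
      have hint1 : IntegrableOn (fun t => ω (a k) / t) (Ioc (a k) ((2:ℝ)⁻¹ ^ k)) := by
        apply (ContinuousOn.integrableOn_Icc ?_).mono_set Ioc_subset_Icc_self
        exact continuousOn_const.div continuousOn_id
          (fun t ht => ne_of_gt (lt_of_lt_of_le (ha_pos k) ht.1))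
      have hint2 : IntegrableOn (fun t => ω t / t) (Ioc (a k) ((2:ℝ)⁻¹ ^ k)) :=
        hint.mono_set (hIsub k)
      apply setIntegral_mono_on hint1 hint2 measurableSet_Ioc
      intro t ht
      have htpos : 0 < t := lt_of_le_of_lt (ha_pos k).le ht.1
      have ht1 : t ≤ 1 := ht.2.trans (hb_le_one k)
      have h : ω (a k) ≤ ω t := hmono (ha_mem k) ⟨htpos.le, ht1⟩ ht.1.le
      gcongr
    calc ∑ k ∈ Finset.range N, ω (a k) * Real.log 2
        ≤ ∑ k ∈ Finset.range N, ∫ t in Ioc (a k) ((2:ℝ)⁻¹ ^ k), ω t / t :=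
          Finset.sum_le_sum fun k _ => hterm k
      _ = ∫ t in ⋃ k ∈ Finset.range N, Ioc (a k) ((2:ℝ)⁻¹ ^ k), ω t / t := by
          refine (integral_biUnion_finset _ (fun k _ => measurableSet_Ioc) ?_
            (fun k _ => hint.mono_set (hIsub k))).symm
          intro i _ j _ hij
          have h : ∀ {i j : ℕ}, i < j →
              Disjoint (Ioc (a i) ((2:ℝ)⁻¹ ^ i)) (Ioc (a j) ((2:ℝ)⁻¹ ^ j)) := by
            intro i j hij
            rw [Set.Ioc_disjoint_Ioc]
            refine le_trans (min_le_right _ _) (le_trans ?_ (le_max_left _ _))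
            exact pow_le_pow_of_le_one (by norm_num) (by norm_num) hij
          rcases hij.lt_or_gt with h' | h'
          · exact h h'
          · exact (h h').symm
      _ ≤ I := by
          apply setIntegral_mono_set hint
          · refine (ae_restrict_iff' measurableSet_Ioc).2 (ae_of_all _ ?_)
            intro t ht
            exact div_nonneg (hnn t ⟨ht.1.le, ht.2⟩) ht.1.le
          · refine HasSubset.Subset.eventuallyLE ?_
            intro t ht
            simp only [mem_iUnion] at ht
            obtain ⟨k, _, htk⟩ := ht
            exact hIsub k htk
  -- key ENNReal estimate: the whole sum
  have key2 : ∑' k, ENNReal.ofReal (ω (a k)) ≤ ENNReal.ofReal (I / Real.log 2) := by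
    rw [ENNReal.tsum_eq_iSup_sum]
    refine iSup_le fun s => ?_
    obtain ⟨N, hN⟩ := s.exists_nat_subset_range
    calc ∑ k ∈ s, ENNReal.ofReal (ω (a k))
        ≤ ∑ k ∈ Finset.range N, ENNReal.ofReal (ω (a k)) :=
          Finset.sum_le_sum_of_subset hN
      _ = ENNReal.ofReal (∑ k ∈ Finset.range N, ω (a k)) :=
          (ENNReal.ofReal_sum_of_nonneg fun k _ => hnn _ (ha_mem k)).symm
      _ ≤ ENNReal.ofReal (I / Real.log 2) := ENNReal.ofReal_le_ofReal (key N)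
  -- the annuli
  set A : ℕ → Set (Fin n → ℝ) := fun k =>
    (fun y => dist y x) ⁻¹' (Ioi (2 * d) ∩ Ico ((2:ℝ) ^ (k + 1) * d) ((2:ℝ) ^ (k + 2) * d))
    with hA_def
  have hdmeas : Measurable fun y : Fin n → ℝ => dist y x :=
    (continuous_id.dist continuous_const).measurable
  have hAmeas : ∀ k, MeasurableSet (A k) :=
    fun k => hdmeas (measurableSet_Ioi.inter measurableSet_Ico)
  have hAmem : ∀ k y, y ∈ A k ↔ 2 * d < dist y x ∧
      (2:ℝ) ^ (k + 1) * d ≤ dist y x ∧ dist y x < (2:ℝ) ^ (k + 2) * d := by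
    intro k y
    simp [hA_def, mem_preimage, mem_inter_iff, mem_Ioi, mem_Ico, and_assoc]
  -- covering
  have hcover : {y : Fin n → ℝ | 2 * d < dist y x} ⊆ ⋃ k, A k := by
    intro y hy
    simp only [mem_setOf_eq] at hy
    have hrpos : 0 < dist y x / d := by
      have : 0 < dist y x := lt_of_le_of_lt (by positivity) hy
      positivity
    have h2 : ((2:ℕ):ℝ) ^ (1:ℤ) ≤ dist y x / d := by
      push_cast
      rw [zpow_one, le_div_iff₀ hd]
      linarith
    have hm : 1 ≤ Int.log 2 (dist y x / d) :=
      (Int.zpow_le_iff_le_log one_lt_two hrpos).1 h2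
    set m := Int.log 2 (dist y x / d) with hm_def
    set k : ℕ := (m - 1).toNat with hk_def
    have hkm : (k : ℤ) = m - 1 := Int.toNat_of_nonneg (by omega)
    have hlow : ((2:ℕ):ℝ) ^ m ≤ dist y x / d := Int.zpow_log_le_self one_lt_two hrpos
    have hhigh : dist y x / d < ((2:ℕ):ℝ) ^ (m + 1) := Int.lt_zpow_succ_log_self one_lt_two _
    refine mem_iUnion.2 ⟨k, (hAmem k y).2 ⟨hy, ?_, ?_⟩⟩
    · have : (2:ℝ) ^ (k + 1) = ((2:ℕ):ℝ) ^ m := by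
        rw [← zpow_natCast]
        push_cast
        congr 1
        omega
      rw [this, ← le_div_iff₀ hd]
      exact hlow
    · have : (2:ℝ) ^ (k + 2) = ((2:ℕ):ℝ) ^ (m + 1) := by
        rw [← zpow_natCast]
        push_cast
        congr 1
        omega
      rw [this, ← div_lt_iff₀ hd]
      exact hhigh
  -- pointwise bound on annulus k
  have hpt : ∀ k, ∀ y ∈ A k, (‖K ξ y - K x y‖₊ : ℝ≥0∞) * ‖f y‖₊ ≤
      ENNReal.ofReal (ω (a k) / ((2:ℝ) ^ (k + 1) * d) ^ n) * ‖f y‖₊ := by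
    intro k y hy
    obtain ⟨h1, h2, _h3⟩ := (hAmem k y).1 hy
    have hxy : dist x y = dist y x := dist_comm x y
    have hdenpos : (0:ℝ) < (2:ℝ) ^ (k + 1) * d := by positivity
    have hdxy : 0 < dist x y := by rw [hxy]; linarith
    have hcond : 2 * dist x ξ < dist x y := by
      rw [dist_comm x ξ, hxy]; linarith
    have hb := hK x ξ y hcond
    have harg0 : 0 ≤ dist x ξ / dist x y := div_nonneg dist_nonneg hdxy.le
    have harg : dist x ξ / dist x y ≤ a k := by
      have h4 : dist x ξ / dist x y ≤ d / ((2:ℝ) ^ (k + 1) * d) := by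
        apply div_le_div₀ (le_of_lt hd) _ hdenpos _
        · rw [dist_comm x ξ]; exact hξ
        · rw [hxy]; exact h2
      have h5 : d / ((2:ℝ) ^ (k + 1) * d) = a k := by
        simp only [ha_def, inv_pow]
        field_simp
      linarith [h4, h5.ge]
    have hωle : ω (dist x ξ / dist x y) ≤ ω (a k) :=
      hmono ⟨harg0, harg.trans (ha_le_one k)⟩ (ha_mem k) harg
    have hpow : ((2:ℝ) ^ (k + 1) * d) ^ n ≤ dist x y ^ n := by
      apply pow_le_pow_left₀ hdenpos.le
      rw [hxy]; exact h2
    have hfinal : ‖K ξ y - K x y‖ ≤ ω (a k) / ((2:ℝ) ^ (k + 1) * d) ^ n := by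
      rw [norm_sub_rev]
      refine hb.trans ?_
      apply div_le_div₀ (hnn _ (ha_mem k)) hωle (by positivity) hpow
    have : (‖K ξ y - K x y‖₊ : ℝ≥0∞) ≤
        ENNReal.ofReal (ω (a k) / ((2:ℝ) ^ (k + 1) * d) ^ n) := by
      rw [show (‖K ξ y - K x y‖₊ : ℝ≥0∞) = ENNReal.ofReal ‖K ξ y - K x y‖ from (ofReal_norm _).symm]
      exact ENNReal.ofReal_le_ofReal hfinal
    exact mul_le_mul_left this _
  -- maximal function bound on balls
  have hMb : ∀ r : ℝ, 0 < r → (∫⁻ y in Metric.ball x r, (‖f y‖₊ : ℝ≥0∞)) ≤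
      ENNReal.ofReal ((2 * r) ^ n) * maximalFunction f x := by
    intro r hr
    have hvol : volume (Metric.ball x r) = ENNReal.ofReal ((2 * r) ^ n) := by
      rw [Real.volume_pi_ball x hr, Fintype.card_fin]
    have h1 : (volume (Metric.ball x r))⁻¹ * ∫⁻ y in Metric.ball x r, ‖f y‖₊ ≤
        maximalFunction f x :=
      le_iSup₂ (f := fun r (_ : r ∈ Ioi (0:ℝ)) =>
        (volume (Metric.ball x r))⁻¹ * ∫⁻ y in Metric.ball x r, (‖f y‖₊ : ℝ≥0∞)) r
        (mem_Ioi.2 hr)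
    have hne : ENNReal.ofReal ((2 * r) ^ n) ≠ 0 :=
      ne_of_gt (ENNReal.ofReal_pos.2 (by positivity))
    calc (∫⁻ y in Metric.ball x r, (‖f y‖₊ : ℝ≥0∞))
        = ENNReal.ofReal ((2 * r) ^ n) *
          ((ENNReal.ofReal ((2 * r) ^ n))⁻¹ * ∫⁻ y in Metric.ball x r, ‖f y‖₊) := by
          rw [← mul_assoc, ENNReal.mul_inv_cancel hne ENNReal.ofReal_ne_top, one_mul]
      _ ≤ ENNReal.ofReal ((2 * r) ^ n) * maximalFunction f x := by
          apply mul_le_mul_right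
          rw [← hvol]
          exact h1
  -- per-annulus bound
  have hAk : ∀ k, (∫⁻ y in A k, (‖K ξ y - K x y‖₊ : ℝ≥0∞) * ‖f y‖₊) ≤
      ENNReal.ofReal ((4:ℝ) ^ n * ω (a k)) * maximalFunction f x := by
    intro k
    have hdenpos : (0:ℝ) < (2:ℝ) ^ (k + 1) * d := by positivity
    have hrad : (0:ℝ) < (2:ℝ) ^ (k + 2) * d := by positivity
    have c1 : (∫⁻ y in A k, (‖K ξ y - K x y‖₊ : ℝ≥0∞) * ‖f y‖₊) ≤
        ENNReal.ofReal (ω (a k) / ((2:ℝ) ^ (k + 1) * d) ^ n) *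
          ∫⁻ y in A k, (‖f y‖₊ : ℝ≥0∞) := by
      rw [← lintegral_const_mul' _ _ ENNReal.ofReal_ne_top]
      exact setLIntegral_mono' (hAmeas k) (hpt k)
    have c2 : (∫⁻ y in A k, (‖f y‖₊ : ℝ≥0∞)) ≤
        ∫⁻ y in Metric.ball x ((2:ℝ) ^ (k + 2) * d), (‖f y‖₊ : ℝ≥0∞) := by
      apply lintegral_mono' (Measure.restrict_mono _ le_rfl) le_rfl
      intro y hy
      exact Metric.mem_ball.2 ((hAmem k y).1 hy).2.2
    have hreal : ω (a k) / ((2:ℝ) ^ (k + 1) * d) ^ n *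
        (2 * ((2:ℝ) ^ (k + 2) * d)) ^ n = (4:ℝ) ^ n * ω (a k) := by
      have h24 : 2 * ((2:ℝ) ^ (k + 2) * d) = 4 * ((2:ℝ) ^ (k + 1) * d) := by
        rw [pow_succ]; ring
      rw [h24]
      exact aux_ratio hdenpos n
    calc (∫⁻ y in A k, (‖K ξ y - K x y‖₊ : ℝ≥0∞) * ‖f y‖₊)
        ≤ ENNReal.ofReal (ω (a k) / ((2:ℝ) ^ (k + 1) * d) ^ n) *
          (ENNReal.ofReal ((2 * ((2:ℝ) ^ (k + 2) * d)) ^ n) * maximalFunction f x) :=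
          c1.trans (mul_le_mul_right (c2.trans (hMb _ hrad)) _)
      _ = ENNReal.ofReal ((4:ℝ) ^ n * ω (a k)) * maximalFunction f x := by
          rw [← mul_assoc, ← ENNReal.ofReal_mul
            (div_nonneg (hnn _ (ha_mem k)) (by positivity)), hreal]
  -- final computation
  calc (∫⁻ y in {y | 2 * d < dist y x}, (‖K ξ y - K x y‖₊ : ℝ≥0∞) * ‖f y‖₊)
      ≤ ∫⁻ y in ⋃ k, A k, (‖K ξ y - K x y‖₊ : ℝ≥0∞) * ‖f y‖₊ :=
        lintegral_mono' (Measure.restrict_mono hcover le_rfl) le_rfl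
    _ ≤ ∑' k, ∫⁻ y in A k, (‖K ξ y - K x y‖₊ : ℝ≥0∞) * ‖f y‖₊ :=
        lintegral_iUnion_le _ _
    _ ≤ ∑' k, ENNReal.ofReal ((4:ℝ) ^ n * ω (a k)) * maximalFunction f x :=
        ENNReal.tsum_le_tsum fun k => hAk k
    _ = (∑' k, ENNReal.ofReal ((4:ℝ) ^ n * ω (a k))) * maximalFunction f x :=
        ENNReal.tsum_mul_right
    _ ≤ ENNReal.ofReal ((4:ℝ) ^ n) * ENNReal.ofReal (I / Real.log 2) *
        maximalFunction f x := by
        apply mul_le_mul_left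
        have : ∀ k : ℕ, ENNReal.ofReal ((4:ℝ) ^ n * ω (a k)) =
            ENNReal.ofReal ((4:ℝ) ^ n) * ENNReal.ofReal (ω (a k)) := fun k =>
          ENNReal.ofReal_mul (by positivity)
        simp_rw [this]
        rw [ENNReal.tsum_mul_left]
        exact mul_le_mul_right key2 _
    _ = ENNReal.ofReal (4 ^ n / Real.log 2 * I) * maximalFunction f x := by
        rw [← ENNReal.ofReal_mul (by positivity)]
        congr 2
        field_simp
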